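/- Let a, b, k ∈ ℝ, r > 0, and N ∈ ℝ. Let I ⊆ ℝ be an open interval and x : I → ℝ a differentiable function with x(ξ) ≠ 0 for all ξ ∈ I, and set y := N·x. If x and y satisfy on I the system x' = ax² − rxy and y' = ((a²−b)/r)x² − y² − (2k+a)xy, then r(r−1)N² − 2r(k+a)N + (a²−b) = 0 and x'(ξ) = (a−rN)x(ξ)² for all ξ ∈ I. -/
import Mathlib


/-- If a nowhere-vanishing solution of the first-order system has
`y = N·x`, then `N` satisfies the quadratic `r(r−1)N² − 2r(k+a)N + (a²−b) = 0` and
`x' = (a − rN)x²`. -/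
theorem stmt5 (a b k r N : ℝ) (hr : 0 < r)
    (I : Set ℝ) (hIopen : IsOpen I) (hIconn : I.OrdConnected) (hIne : I.Nonempty)
    (x y : ℝ → ℝ) (hy : ∀ ξ, y ξ = N * x ξ)
    (hxne : ∀ ξ ∈ I, x ξ ≠ 0)
    (hx' : ∀ ξ ∈ I, HasDerivAt x (a * (x ξ) ^ 2 - r * x ξ * y ξ) ξ)
    (hy' : ∀ ξ ∈ I, HasDerivAt y
      ((a ^ 2 - b) / r * (x ξ) ^ 2 - (y ξ) ^ 2 - (2 * k + a) * x ξ * y ξ) ξ) :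
    r * (r - 1) * N ^ 2 - 2 * r * (k + a) * N + (a ^ 2 - b) = 0 ∧
    ∀ ξ ∈ I, HasDerivAt x ((a - r * N) * (x ξ) ^ 2) ξ := by
  obtain ⟨ξ0, hξ0⟩ := hIne
  have hx0 := hxne ξ0 hξ0
  have hyf : y = fun ξ => N * x ξ := funext hy
  have h2 : HasDerivAt y (N * (a * (x ξ0) ^ 2 - r * x ξ0 * y ξ0)) ξ0 := by
    have := (hx' ξ0 hξ0).const_mul N
    simp only [← hy] at this
    exact this
  have huniq := (hy' ξ0 hξ0).unique h2
  rw [hy ξ0] at huniq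
  have hr' : r ≠ 0 := ne_of_gt hr
  have hx2 : (x ξ0) ^ 2 ≠ 0 := pow_ne_zero 2 hx0
  have hquad : r * (r - 1) * N ^ 2 - 2 * r * (k + a) * N + (a ^ 2 - b) = 0 := by
    field_simp at huniq
    apply mul_left_cancel₀ hx2
    nlinarith [huniq]
  refine ⟨hquad, fun ξ hξ => ?_⟩
  have := hx' ξ hξ
  rw [hy ξ] at this
  convert this using 1
  ring
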